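/- The map a ↦ Σ_{gH ∈ G/H} α_g(a) ⊗ E_{gH,gH} is an injective R-algebra homomorphism from A^H into (A ⊗ End_R(R[G/H]))^G, where E_{gH,gH} is the projection onto the basis element gH. -/
import Mathlib

open scoped BigOperators TensorProduct
open scoped Classical

def SkewHecke.IsSection {G : Type*} [Group G] {H : Subgroup G} (s : G ⧸ H → G) : Prop :=
  ∀ c : G ⧸ H, QuotientGroup.mk (s c) = c

/-- Left translation by `g` on the free module `R[G/H]`. -/
noncomputable def SkewHecke.P (R : Type*) {G : Type*} [CommRing R] [Group G]
    (H : Subgroup G) (g : G) : ((G ⧸ H) →₀ R) →ₗ[R] ((G ⧸ H) →₀ R) :=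
  Finsupp.lmapDomain R R (fun c => g • c)

/-- The matrix unit `E_{c,d} : R[G/H] → R[G/H]`. -/
noncomputable def SkewHecke.matUnit (R : Type*) {G : Type*} [CommRing R] [Group G]
    (H : Subgroup G) (c d : G ⧸ H) : Module.End R ((G ⧸ H) →₀ R) :=
  (Finsupp.lsingle c).comp (Finsupp.lapply d)

/-- Conjugation by `g` on `End_R(R[G/H])`, `T ↦ P_g ∘ T ∘ P_{g⁻¹}`. -/
noncomputable def SkewHecke.conjE (R : Type*) {G : Type*} [CommRing R] [Group G]
    (H : Subgroup G) (g : G) :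
    Module.End R ((G ⧸ H) →₀ R) →ₗ[R] Module.End R ((G ⧸ H) →₀ R) :=
  (LinearMap.llcomp R _ _ _ (SkewHecke.P R H g)).comp
    (LinearMap.lcomp R _ (SkewHecke.P R H g⁻¹))

/-- The diagonal action of `g` on `A ⊗ End_R(R[G/H])`. -/
noncomputable def SkewHecke.actTE {R A G : Type*} [CommRing R] [Ring A] [Algebra R A]
    [Group G] (H : Subgroup G) (α : G →* (A ≃ₐ[R] A)) (g : G) :
    (A ⊗[R] Module.End R ((G ⧸ H) →₀ R)) →ₗ[R]
      (A ⊗[R] Module.End R ((G ⧸ H) →₀ R)) :=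
  TensorProduct.map (α g).toLinearMap (SkewHecke.conjE R H g)

section Aux

variable {R A G : Type*} [CommRing R] [Ring A] [Algebra R A] [Group G] (H : Subgroup G)

lemma SkewHecke.matUnit_mul (c d : G ⧸ H) :
    SkewHecke.matUnit R H c c * SkewHecke.matUnit R H d d =
      if c = d then SkewHecke.matUnit R H c c else 0 := by
  ext f x
  by_cases h : c = d
  · subst h
    simp [SkewHecke.matUnit, Module.End.mul_apply, Finsupp.single_apply]
  · simp [SkewHecke.matUnit, Module.End.mul_apply, Finsupp.single_apply, h, Ne.symm h]

lemma SkewHecke.sum_matUnit [Fintype (G ⧸ H)] :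
    (∑ c : G ⧸ H, SkewHecke.matUnit R H c c) = 1 := by
  ext f x
  simp [SkewHecke.matUnit, LinearMap.sum_apply, Finsupp.single_apply,
    Finset.sum_apply', Finset.sum_ite_eq, eq_comm]

lemma SkewHecke.conjE_matUnit (g : G) (c : G ⧸ H) :
    SkewHecke.conjE R H g (SkewHecke.matUnit R H c c) =
      SkewHecke.matUnit R H (g • c) (g • c) := by
  refine Finsupp.lhom_ext fun d r => ?_
  ext x
  simp [SkewHecke.conjE, SkewHecke.matUnit, SkewHecke.P, LinearMap.llcomp_apply,
    LinearMap.lcomp_apply, Finsupp.mapDomain_single, Finsupp.single_apply,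
    inv_smul_eq_iff]

lemma SkewHecke.rep_eq (α : G →* (A ≃ₐ[R] A)) {a : A} (ha : ∀ h ∈ H, α h a = a)
    {g g' : G} (h : (QuotientGroup.mk g : G ⧸ H) = QuotientGroup.mk g') :
    α g a = α g' a := by
  have hh : g'⁻¹ * g ∈ H := (QuotientGroup.eq (s := H)).mp h.symm
  have : g = g' * (g'⁻¹ * g) := by group
  rw [this, map_mul]
  simp only [AlgEquiv.mul_apply]
  rw [ha _ hh]

end Aux

theorem fixed_to_tensor_end_invariants {R A G : Type*} [CommRing R] [Ring A]
    [Algebra R A] [Group G] (H : Subgroup G) [Fintype (G ⧸ H)]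
    (α : G →* (A ≃ₐ[R] A)) (s : G ⧸ H → G) (hs : SkewHecke.IsSection s) :
    let F : A → (A ⊗[R] Module.End R ((G ⧸ H) →₀ R)) :=
      fun a => ∑ c : G ⧸ H, α (s c) a ⊗ₜ[R] SkewHecke.matUnit R H c c
    -- `F` is independent of the choice of coset representatives on `A^H`
    (∀ (t : G ⧸ H → G), SkewHecke.IsSection t → ∀ a : A, (∀ h ∈ H, α h a = a) →
      F a = ∑ c : G ⧸ H, α (t c) a ⊗ₜ[R] SkewHecke.matUnit R H c c) ∧
    -- `F` takes values in the `G`-invariants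
    (∀ a : A, (∀ h ∈ H, α h a = a) → ∀ g : G, SkewHecke.actTE H α g (F a) = F a) ∧
    -- `F` is an injective `R`-algebra homomorphism on `A^H`
    Set.InjOn F {a | ∀ h ∈ H, α h a = a} ∧
    (∀ a b : A, F (a + b) = F a + F b) ∧
    (∀ (r : R) (a : A), F (r • a) = r • F a) ∧
    (∀ a b : A, (∀ h ∈ H, α h a = a) → (∀ h ∈ H, α h b = b) → F (a * b) = F a * F b) ∧
    F 1 = 1 := by
  intro F
  classical
  refine ⟨?_, ?_, ?_, ?_, ?_, ?_, ?_⟩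
  · -- independence of section
    intro t ht a ha
    refine Finset.sum_congr rfl fun c _ => ?_
    rw [SkewHecke.rep_eq H α ha ((hs c).trans (ht c).symm)]
  · -- invariance
    intro a ha g
    show SkewHecke.actTE H α g (∑ c : G ⧸ H, _) = _
    rw [map_sum]
    have : ∀ c : G ⧸ H, SkewHecke.actTE H α g (α (s c) a ⊗ₜ[R] SkewHecke.matUnit R H c c)
        = α (g * s c) a ⊗ₜ[R] SkewHecke.matUnit R H (g • c) (g • c) := by
      intro c
      simp [SkewHecke.actTE, SkewHecke.conjE_matUnit, map_mul]
    simp only [this]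
    show _ = ∑ c : G ⧸ H, α (s c) a ⊗ₜ[R] SkewHecke.matUnit R H c c
    refine Fintype.sum_equiv (MulAction.toPerm g)
      (fun c => α (g * s c) a ⊗ₜ[R] SkewHecke.matUnit R H (g • c) (g • c))
      (fun c => α (s c) a ⊗ₜ[R] SkewHecke.matUnit R H c c) fun c => ?_
    show α (g * s c) a ⊗ₜ[R] SkewHecke.matUnit R H (g • c) (g • c)
      = α (s (g • c)) a ⊗ₜ[R] SkewHecke.matUnit R H (g • c) (g • c)
    congr 1
    refine SkewHecke.rep_eq H α ha ?_
    have h1 : (QuotientGroup.mk (g * s c) : G ⧸ H) = g • QuotientGroup.mk (s c) := rfl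
    rw [h1, hs c]
    exact (hs (g • c)).symm
  · -- injectivity
    intro a ha b hb hab
    let c₀ : G ⧸ H := QuotientGroup.mk 1
    let φ : Module.End R ((G ⧸ H) →₀ R) →ₗ[R] R :=
      (Finsupp.lapply c₀).comp (LinearMap.applyₗ (Finsupp.single c₀ (1:R)))
    let ψ : (A ⊗[R] Module.End R ((G ⧸ H) →₀ R)) →ₗ[R] A :=
      (TensorProduct.rid R A).toLinearMap.comp (TensorProduct.map LinearMap.id φ)
    have key : ∀ x : A, (∀ h ∈ H, α h x = x) → ψ (F x) = x := by
      intro x hx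
      show ψ (∑ c : G ⧸ H, _) = x
      rw [map_sum]
      have hφ : ∀ c : G ⧸ H, φ (SkewHecke.matUnit R H c c) = if c = c₀ then 1 else 0 := by
        intro c
        by_cases h : c = c₀ <;>
          simp [φ, SkewHecke.matUnit, Finsupp.single_apply, h]
      have : ∀ c : G ⧸ H, ψ (α (s c) x ⊗ₜ[R] SkewHecke.matUnit R H c c)
          = if c = c₀ then α (s c) x else 0 := by
        intro c
        by_cases h : c = c₀ <;> simp [ψ, h, hφ]
      simp only [this]
      rw [Finset.sum_ite_eq' Finset.univ c₀]
      simp only [Finset.mem_univ, if_true]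
      have : α (s c₀) x = α 1 x := SkewHecke.rep_eq H α hx (hs c₀)
      rw [this]; simp
    have := key a ha
    rw [hab] at this
    rw [← this, key b hb]
  · intro a b
    simp only [F, map_add, TensorProduct.add_tmul, Finset.sum_add_distrib]
  · intro r a
    simp only [F, map_smul, TensorProduct.smul_tmul', Finset.smul_sum]
  · intro a b _ _
    show (∑ c : G ⧸ H, α (s c) (a * b) ⊗ₜ[R] SkewHecke.matUnit R H c c)
      = (∑ c : G ⧸ H, α (s c) a ⊗ₜ[R] SkewHecke.matUnit R H c c)
        * (∑ c : G ⧸ H, α (s c) b ⊗ₜ[R] SkewHecke.matUnit R H c c)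
    rw [Finset.sum_mul_sum]
    simp only [Algebra.TensorProduct.tmul_mul_tmul, SkewHecke.matUnit_mul]
    have hite : ∀ c d : G ⧸ H, (α (s c) a * α (s d) b) ⊗ₜ[R]
        (if c = d then SkewHecke.matUnit R H c c else 0)
        = if c = d then (α (s c) a * α (s c) b) ⊗ₜ[R] SkewHecke.matUnit R H c c else 0 := by
      intro c d
      split
      · next h => subst h; simp
      · simp
    simp only [hite, Finset.sum_ite_eq, Finset.mem_univ, if_true, map_mul]
  · show (∑ c : G ⧸ H, α (s c) (1:A) ⊗ₜ[R] SkewHecke.matUnit R H c c) = 1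
    simp only [map_one]
    rw [← TensorProduct.tmul_sum, SkewHecke.sum_matUnit, Algebra.TensorProduct.one_def]
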